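/- Let p ≥ 0 be a real number and let F : Γ → ℂ satisfy ∑_{σ ∈ Γ} λ_σ^{-2p} |F(σ)|² < ∞. Set Ψ_n = ∑_{k=0}^{n} 𝔈_k(𝔞_k†(𝔞_k F)). Then ∑_{σ ∈ Γ} λ_σ^{-2p} |Ψ_n(σ) − (F(σ) − (𝔈 F)(σ))|² → 0 as n → ∞; i.e., the Clark–Ocone partial sums converge to F − 𝔈F in the ‖·‖_{-p} norm of S_p*. -/

import Mathlib

open scoped BigOperators

/-- `λ_σ = ∏_{k ∈ σ} (k+1)`, with `λ_∅ = 1`. -/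
noncomputable def lam (σ : Finset ℕ) : ℝ := ∏ k ∈ σ, ((k : ℝ) + 1)

/-- The annihilation operator: `(𝔞_k F)(σ) = F(σ ∪ {k})` if `k ∉ σ`, else `0`. -/
def ann (k : ℕ) (F : Finset ℕ → ℂ) : Finset ℕ → ℂ :=
  fun σ => if k ∈ σ then 0 else F (insert k σ)

/-- The creation operator: `(𝔞_k† F)(σ) = F(σ \ {k})` if `k ∈ σ`, else `0`. -/
def cre (k : ℕ) (F : Finset ℕ → ℂ) : Finset ℕ → ℂ :=
  fun σ => if k ∈ σ then F (σ.erase k) else 0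

/-- The conditional expectation operator:
`(𝔈_k F)(σ) = F(σ)` if every `j ∈ σ` satisfies `j ≤ k`, else `0`. -/
def cexp (k : ℕ) (F : Finset ℕ → ℂ) : Finset ℕ → ℂ :=
  fun σ => if ∀ j ∈ σ, j ≤ k then F σ else 0

/-- The expectation operator: `(𝔈 F)(σ) = F(∅)` if `σ = ∅`, else `0`. -/
def expec (F : Finset ℕ → ℂ) : Finset ℕ → ℂ :=
  fun σ => if σ = ∅ then F ∅ else 0

/-- If `F ∈ S_p*`, the Clark–Ocone partial sums `Ψ_n = ∑_{k=0}^n 𝔈_k 𝔞_k† 𝔞_k F`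
converge to `F − 𝔈F` in the `‖·‖_{-p}` norm. -/
theorem stmt11 (p : ℝ) (hp : 0 ≤ p) (F : Finset ℕ → ℂ)
    (hF : Summable (fun σ : Finset ℕ => lam σ ^ (-(2 * p)) * ‖F σ‖ ^ 2)) :
    Filter.Tendsto
      (fun n : ℕ => ∑' σ : Finset ℕ, lam σ ^ (-(2 * p)) *
        ‖(∑ k ∈ Finset.range (n + 1), cexp k (cre k (ann k F)) σ) -
          (F σ - expec F σ)‖ ^ 2)
      Filter.atTop (nhds 0) := by
  set g : Finset ℕ → ℝ := fun σ => lam σ ^ (-(2 * p)) * ‖F σ‖ ^ 2 with hgdef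
  have hg0 : ∀ σ, 0 ≤ g σ := by
    intro σ
    apply mul_nonneg
    · exact Real.rpow_nonneg (Finset.prod_nonneg (fun k _ => by positivity)) _
    · positivity
  have hterm : ∀ k (σ : Finset ℕ), cexp k (cre k (ann k F)) σ
      = if k ∈ σ ∧ ∀ j ∈ σ, j ≤ k then F σ else 0 := by
    intro k σ
    simp only [cexp, cre, ann]
    by_cases h1 : ∀ j ∈ σ, j ≤ k
    · by_cases h2 : k ∈ σ
      · simp [h1, h2, Finset.notMem_erase, Finset.insert_erase h2]
      · simp [h1, h2]
    · simp [h1]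
  have hpt : ∀ n (σ : Finset ℕ),
      lam σ ^ (-(2 * p)) * ‖
        ((∑ k ∈ Finset.range (n + 1), cexp k (cre k (ann k F)) σ) - (F σ - expec F σ))‖ ^ 2
      = if σ ⊆ Finset.range (n + 1) then 0 else g σ := by
    intro n σ
    by_cases hs : σ ⊆ Finset.range (n + 1)
    · rw [if_pos hs]
      rcases eq_or_ne σ ∅ with rfl | hne
      · simp [hterm, expec]
      · have hnemp : σ.Nonempty := Finset.nonempty_iff_ne_empty.mpr hne
        have hm : σ.max' hnemp ∈ σ := Finset.max'_mem _ _
        have hsum : (∑ k ∈ Finset.range (n + 1), cexp k (cre k (ann k F)) σ) = F σ := by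
          rw [Finset.sum_congr rfl (fun k _ => hterm k σ)]
          rw [Finset.sum_eq_single (σ.max' hnemp)]
          · exact if_pos ⟨hm, fun j hj => Finset.le_max' σ j hj⟩
          · intro k _ hk
            apply if_neg
            rintro ⟨hk1, hk2⟩
            exact hk (le_antisymm (Finset.le_max' σ k hk1) (hk2 _ hm))
          · intro h
            exact absurd (hs hm) h
        rw [hsum]
        simp [expec, hne]
    · rw [if_neg hs]
      obtain ⟨j, hj, hjn⟩ := Finset.not_subset.mp hs
      have hjn' : n + 1 ≤ j := by
        by_contra h
        exact hjn (Finset.mem_range.mpr (by omega))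
      have hsum : (∑ k ∈ Finset.range (n + 1), cexp k (cre k (ann k F)) σ) = 0 := by
        apply Finset.sum_eq_zero
        intro k hk
        rw [hterm]
        apply if_neg
        rintro ⟨-, hk2⟩
        have := hk2 j hj
        have := Finset.mem_range.mp hk
        omega
      have hne : σ ≠ ∅ := by
        intro h; rw [h] at hj; exact absurd hj (Finset.notMem_empty j)
      rw [hsum]
      simp [expec, hne, hgdef]
  have hmono : Monotone (fun n : ℕ => (Finset.range (n + 1)).powerset) := by
    intro a b hab
    exact Finset.powerset_mono.mpr (Finset.range_subset_range.mpr (by omega))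
  have hP : Filter.Tendsto (fun n : ℕ => (Finset.range (n + 1)).powerset)
      Filter.atTop Filter.atTop := by
    apply Filter.tendsto_atTop_atTop_of_monotone hmono
    intro s
    refine ⟨s.sup (fun σ => σ.sup id), ?_⟩
    intro σ hσ
    simp only [Finset.mem_powerset]
    intro j hj
    have h1 : j ≤ σ.sup id := Finset.le_sup (f := id) hj
    have h2 : σ.sup id ≤ s.sup (fun σ => σ.sup id) := Finset.le_sup hσ
    exact Finset.mem_range.mpr (by omega)
  have key : ∀ n : ℕ,
      (∑' σ : Finset ℕ, if σ ⊆ Finset.range (n + 1) then (0 : ℝ) else g σ)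
      = (∑' σ, g σ) - ∑ σ ∈ (Finset.range (n + 1)).powerset, g σ := by
    intro n
    have h1 : Summable (fun σ : Finset ℕ => if σ ⊆ Finset.range (n + 1) then (0 : ℝ) else g σ) := by
      apply Summable.of_nonneg_of_le (fun σ => ?_) (fun σ => ?_) hF
      · split <;> [exact le_rfl; exact hg0 σ]
      · split <;> [exact hg0 σ; exact le_rfl]
    have h2 : Summable (fun σ : Finset ℕ => if σ ⊆ Finset.range (n + 1) then g σ else (0 : ℝ)) := by
      apply summable_of_ne_finset_zero (s := (Finset.range (n + 1)).powerset)
      intro σ hσ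
      exact if_neg (fun h => hσ (Finset.mem_powerset.mpr h))
    have hadd := Summable.tsum_add h1 h2
    have heq : (fun σ : Finset ℕ => (if σ ⊆ Finset.range (n + 1) then (0 : ℝ) else g σ)
        + (if σ ⊆ Finset.range (n + 1) then g σ else 0)) = g := by
      funext σ
      split <;> ring
    rw [heq] at hadd
    have h3 : (∑' σ : Finset ℕ, if σ ⊆ Finset.range (n + 1) then g σ else (0 : ℝ))
        = ∑ σ ∈ (Finset.range (n + 1)).powerset, (if σ ⊆ Finset.range (n + 1) then g σ else 0) := by
      apply tsum_eq_sum
      intro σ hσ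
      exact if_neg (fun h => hσ (Finset.mem_powerset.mpr h))
    have h4 : ∑ σ ∈ (Finset.range (n + 1)).powerset,
        (if σ ⊆ Finset.range (n + 1) then g σ else (0 : ℝ))
        = ∑ σ ∈ (Finset.range (n + 1)).powerset, g σ := by
      apply Finset.sum_congr rfl
      intro σ hσ
      exact if_pos (Finset.mem_powerset.mp hσ)
    rw [h3, h4] at hadd
    linarith
  have hgoal : (fun n : ℕ => ∑' σ : Finset ℕ, lam σ ^ (-(2 * p)) *
        ‖(∑ k ∈ Finset.range (n + 1), cexp k (cre k (ann k F)) σ) -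
          (F σ - expec F σ)‖ ^ 2)
      = fun n => (∑' σ, g σ) - ∑ σ ∈ (Finset.range (n + 1)).powerset, g σ := by
    funext n
    rw [← key n]
    exact tsum_congr (hpt n)
  rw [hgoal]
  have := Filter.Tendsto.sub (tendsto_const_nhds
    (x := ∑' σ, g σ) (f := Filter.atTop (α := ℕ))) (hF.hasSum.comp hP)
  simpa using this
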